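/- For every p ∈ ℝ⁵, let τ = sin(p₁+p₃), let G(p) be the 5×5 matrix with rows (1+τ², 0, τ², 0, −τ), (0, 1, 0, 0, 0), (τ², 0, 1+τ², 0, −τ), (0, 0, 0, 1, 0), (−τ, 0, −τ, 0, 1), defining the metric g_p(X,Y) = XᵀG(p)Y, and let φ(p) be the 5×5 matrix with rows (0, −1, 0, 0, 0), (1, 0, 0, 0, 0), (0, 0, 0, −1, 0), (0, 0, 1, 0, 0), (0, −τ, 0, −τ, 0). Let F : ℝ⁵ → ℝ² be the linear map F(x₁,…,x₅) = (x₁+x₂, x₃+x₄), and e₁,…,e₅ the standard basis. Then: (i) ker F = span{e₁−e₂, e₃−e₄, e₅} and ξ = e₅ ∈ ker F; (ii) the vectors E₁ = e₁+τe₅, E₂ = e₃+τe₅, E₃ = e₂, E₄ = e₄, E₅ = e₅ form a g_p-orthonormal basis of ℝ⁵; and (iii) the image of ker F under φ(p) equals the g_p-orthogonal complement of ker F, i.e. {X ∈ ℝ⁵ : g_p(X, W) = 0 for all W ∈ ker F}. Hence the kernel of F is anti-invariant under φ with ξ vertical (Example 4). -/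

import Mathlib

open Matrix

noncomputable section

/-- `τ = sin(p₁ + p₃)`. -/
def tau14 (p : Fin 5 → ℝ) : ℝ := Real.sin (p 0 + p 2)

/-- The metric matrix `G(p)` of Example 2, defining `g_p(X,Y) = Xᵀ G(p) Y`. -/
def G14 (p : Fin 5 → ℝ) : Matrix (Fin 5) (Fin 5) ℝ :=
  !![1 + tau14 p ^ 2, 0, tau14 p ^ 2, 0, -tau14 p;
     0, 1, 0, 0, 0;
     tau14 p ^ 2, 0, 1 + tau14 p ^ 2, 0, -tau14 p;
     0, 0, 0, 1, 0;
     -tau14 p, 0, -tau14 p, 0, 1]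

/-- The point-dependent metric `g_p(X,Y) = Xᵀ G(p) Y`. -/
def g14 (p X Y : Fin 5 → ℝ) : ℝ := dotProduct X ((G14 p).mulVec Y)

/-- The matrix `φ(p)` of Example 2. -/
def phi14 (p : Fin 5 → ℝ) : Matrix (Fin 5) (Fin 5) ℝ :=
  !![0, -1, 0, 0, 0;
     1, 0, 0, 0, 0;
     0, 0, 0, -1, 0;
     0, 0, 1, 0, 0;
     0, -tau14 p, 0, -tau14 p, 0]

/-- The linear map `F(x₁,…,x₅) = (x₁+x₂, x₃+x₄)` of Example 4. -/
def F14 : (Fin 5 → ℝ) →ₗ[ℝ] (Fin 2 → ℝ) :=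
  Matrix.mulVecLin !![(1 : ℝ), 1, 0, 0, 0; 0, 0, 1, 1, 0]

/-- The frame `E₁ = e₁+τe₅, E₂ = e₃+τe₅, E₃ = e₂, E₄ = e₄, E₅ = e₅`. -/
def E14 (p : Fin 5 → ℝ) : Fin 5 → (Fin 5 → ℝ) :=
  ![![1, 0, 0, 0, tau14 p],
    ![0, 0, 1, 0, tau14 p],
    ![0, 1, 0, 0, 0],
    ![0, 0, 0, 1, 0],
    ![0, 0, 0, 0, 1]]

lemma mem_ker_F14 (x : Fin 5 → ℝ) :
    x ∈ LinearMap.ker F14 ↔ x 0 + x 1 = 0 ∧ x 2 + x 3 = 0 := by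
  rw [LinearMap.mem_ker]
  constructor
  · intro h
    have h0 := congrFun h 0
    have h1 := congrFun h 1
    simp [F14, Matrix.mulVecLin_apply, Matrix.mulVec, dotProduct,
      Fin.sum_univ_five] at h0 h1
    exact ⟨h0, h1⟩
  · intro ⟨h0, h1⟩
    funext i
    fin_cases i <;>
      simp [F14, Matrix.mulVecLin_apply, Matrix.mulVec, dotProduct,
        Fin.sum_univ_five] <;> linarith

lemma g14_expand (p X Y : Fin 5 → ℝ) :
    g14 p X Y =
      X 0 * ((1 + tau14 p ^ 2) * Y 0 + tau14 p ^ 2 * Y 2 + -tau14 p * Y 4) +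
      X 1 * Y 1 +
      X 2 * (tau14 p ^ 2 * Y 0 + (1 + tau14 p ^ 2) * Y 2 + -tau14 p * Y 4) +
      X 3 * Y 3 +
      X 4 * (-tau14 p * Y 0 + -tau14 p * Y 2 + Y 4) := by
  simp [g14, G14, Matrix.mulVec, dotProduct, Fin.sum_univ_five,
    Matrix.vecHead, Matrix.vecTail]

lemma phi_mulVec14 (p : Fin 5 → ℝ) (x : Fin 5 → ℝ) :
    (phi14 p).mulVec x = ![-x 1, x 0, -x 3, x 2, -tau14 p * x 1 - tau14 p * x 3] := by
  funext i
  fin_cases i <;>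
    simp [phi14, Matrix.mulVec, dotProduct, Fin.sum_univ_five] <;> ring

/-- Example 4: for the cosymplectic structure of Example 2 on `ℝ⁵`
and the linear map `F(x) = (x₁+x₂, x₃+x₄)`:
(i) `ker F = span{e₁−e₂, e₃−e₄, e₅}` and `ξ = e₅ ∈ ker F`;
(ii) `E₁,…,E₅` form a `g_p`-orthonormal basis of `ℝ⁵`;
(iii) `φ(p)(ker F)` equals the `g_p`-orthogonal complement of `ker F`.
Hence the kernel of `F` is anti-invariant under `φ` with `ξ` vertical. -/
theorem example4_anti_invariant_kernel (p : Fin 5 → ℝ) :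
    (LinearMap.ker F14 = Submodule.span ℝ
        {(![1, -1, 0, 0, 0] : Fin 5 → ℝ), ![0, 0, 1, -1, 0], ![0, 0, 0, 0, 1]} ∧
      (![0, 0, 0, 0, 1] : Fin 5 → ℝ) ∈ LinearMap.ker F14) ∧
    ((∀ i j : Fin 5, g14 p (E14 p i) (E14 p j) = if i = j then 1 else 0) ∧
      Submodule.span ℝ (Set.range (E14 p)) = ⊤) ∧
    (fun X => (phi14 p).mulVec X) '' (LinearMap.ker F14 : Set (Fin 5 → ℝ)) =
      {X : Fin 5 → ℝ | ∀ W ∈ LinearMap.ker F14, g14 p X W = 0} := by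
  refine ⟨⟨?_, ?_⟩, ⟨?_, ?_⟩, ?_⟩
  · -- kernel = span
    apply le_antisymm
    · intro x hx
      rw [mem_ker_F14] at hx
      have hx1 : x 1 = -x 0 := by linarith [hx.1]
      have hx3 : x 3 = -x 2 := by linarith [hx.2]
      have hrep : x = x 0 • (![1, -1, 0, 0, 0] : Fin 5 → ℝ) +
          x 2 • (![0, 0, 1, -1, 0] : Fin 5 → ℝ) +
          x 4 • (![0, 0, 0, 0, 1] : Fin 5 → ℝ) := by
        funext i
        fin_cases i <;> simp [hx1, hx3]
      rw [hrep]
      refine Submodule.add_mem _ (Submodule.add_mem _ ?_ ?_) ?_ <;>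
        exact Submodule.smul_mem _ _ (Submodule.subset_span (by simp))
    · rw [Submodule.span_le]
      intro v hv
      simp only [Set.mem_insert_iff, Set.mem_singleton_iff] at hv
      rcases hv with h | h | h <;> subst h <;>
        · rw [SetLike.mem_coe, mem_ker_F14]; simp
  · -- ξ ∈ ker
    rw [mem_ker_F14]; simp
  · -- orthonormal
    intro i j
    fin_cases i <;> fin_cases j <;>
      simp [g14_expand, E14] <;> ring
  · -- spanning
    rw [eq_top_iff]
    intro x _
    have hrep : x = x 0 • E14 p 0 + x 2 • E14 p 1 + x 1 • E14 p 2 + x 3 • E14 p 3 +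
        (x 4 - tau14 p * x 0 - tau14 p * x 2) • E14 p 4 := by
      funext i
      fin_cases i <;> simp [E14] <;> ring
    rw [hrep]
    refine Submodule.add_mem _ (Submodule.add_mem _ (Submodule.add_mem _
      (Submodule.add_mem _ ?_ ?_) ?_) ?_) ?_ <;>
      exact Submodule.smul_mem _ _ (Submodule.subset_span (Set.mem_range_self _))
  · -- image = orthogonal complement
    ext X
    simp only [Set.mem_image, SetLike.mem_coe, Set.mem_setOf_eq]
    constructor
    · rintro ⟨x, hx, rfl⟩ W hW
      rw [mem_ker_F14] at hx hW
      rw [phi_mulVec14, g14_expand]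
      simp only [Matrix.cons_val_zero, Matrix.cons_val_one, Matrix.head_cons,
        Matrix.cons_val_two, Matrix.tail_cons, Matrix.cons_val_three,
        Matrix.cons_val_four]
      linear_combination (x 0) * hW.1 + (x 2) * hW.2 - (W 0) * hx.1 - (W 2) * hx.2
    · intro hX
      have h1 := hX ![1, -1, 0, 0, 0] (by rw [mem_ker_F14]; simp)
      have h2 := hX ![0, 0, 1, -1, 0] (by rw [mem_ker_F14]; simp)
      have h3 := hX ![0, 0, 0, 0, 1] (by rw [mem_ker_F14]; simp)
      rw [g14_expand] at h1 h2 h3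
      simp only [Matrix.cons_val_zero, Matrix.cons_val_one, Matrix.head_cons,
        Matrix.cons_val_two, Matrix.tail_cons, Matrix.cons_val_three,
        Matrix.cons_val_four] at h1 h2 h3
      have hX1 : X 1 = X 0 := by linear_combination (-1) * h1 - tau14 p * h3
      have hX3 : X 3 = X 2 := by linear_combination (-1) * h2 - tau14 p * h3
      have hX4 : X 4 = tau14 p * X 0 + tau14 p * X 2 := by linear_combination h3
      refine ⟨![X 0, -X 0, X 2, -X 2, 0], by rw [mem_ker_F14]; simp, ?_⟩
      rw [phi_mulVec14]
      funext i
      fin_cases i <;> simp [hX1, hX3, hX4] <;> ring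

end
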